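/- Let n ≥ 2 and let p, q ≥ 0 be integers. For every integer k ≥ 0 and all z ∈ ℂⁿ: if k ≥ p then (Z̃₁^*)^p (Z̃₂)^q φ_k^{n−1}(z) = (−2)^{−p−q} z₁^p \overline{z_2}^q φ_{k−p}^{n+p+q−1}(z), and if k < p then (Z̃₁^*)^p (Z̃₂)^q φ_k^{n−1} ≡ 0. -/

import Mathlib

open MeasureTheory Complex Finset Metric

noncomputable section

/-- `ℂⁿ` as a Euclidean space. -/
abbrev Cn (n : ℕ) := EuclideanSpace ℂ (Fin n)

instance (n : ℕ) : MeasurableSpace (Cn n) := inferInstanceAs (MeasurableSpace (WithLp 2 (Fin n → ℂ)))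
instance (n : ℕ) : BorelSpace (Cn n) := inferInstanceAs (BorelSpace (PiLp 2 fun _ : Fin n => ℂ))
instance (n : ℕ) : MeasureSpace (Cn n) := ⟨(volume : Measure (Fin n → ℂ)).map (WithLp.toLp 2)⟩

/-- The Laguerre polynomial of degree `k` and order `α`:
`L_k^α(x) = Σ_{i=0}^k (−1)^i ((α+k)!/((k−i)!(α+i)! i!)) x^i`. -/
def laguerreL (k α : ℕ) (x : ℝ) : ℝ :=
  ∑ i ∈ Finset.range (k + 1),
    (-1 : ℝ) ^ i * ((α + k).factorial : ℝ) /
      (((k - i).factorial : ℝ) * ((α + i).factorial : ℝ) * (i.factorial : ℝ)) * x ^ i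

/-- The Laguerre function `φ_k^ν(z) = L_k^ν(|z|²/2) e^{−|z|²/4}` on `ℂⁿ`. -/
def phiFn (n k ν : ℕ) (z : Cn n) : ℂ :=
  ((laguerreL k ν (‖z‖ ^ 2 / 2) * Real.exp (-‖z‖ ^ 2 / 4) : ℝ) : ℂ)

/-- The radial profile `φ_k^ν(r) = L_k^ν(r²/2) e^{−r²/4}`. -/
def phiRad (k ν : ℕ) (r : ℝ) : ℝ :=
  laguerreL k ν (r ^ 2 / 2) * Real.exp (-r ^ 2 / 4)

/-- Directional derivative `∂/∂x_j`. -/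
def pdx (n : ℕ) (j : Fin n) (f : Cn n → ℂ) (z : Cn n) : ℂ :=
  fderiv ℝ f z (EuclideanSpace.single j 1)

/-- Directional derivative `∂/∂y_j`. -/
def pdy (n : ℕ) (j : Fin n) (f : Cn n → ℂ) (z : Cn n) : ℂ :=
  fderiv ℝ f z (EuclideanSpace.single j Complex.I)

/-- The operator `Z̃_j = ∂/∂z_j − (1/4) z̄_j`, where
`∂/∂z_j = (1/2)(∂/∂x_j − i ∂/∂y_j)`. -/
def Zt (n : ℕ) (j : Fin n) (f : Cn n → ℂ) : Cn n → ℂ := fun z =>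
  (1 / 2 : ℂ) * (pdx n j f z - Complex.I * pdy n j f z) -
    (1 / 4 : ℂ) * (starRingEnd ℂ) (z j) * f z

/-- The operator `Z̃_j^* = ∂/∂z̄_j + (1/4) z_j`, where
`∂/∂z̄_j = (1/2)(∂/∂x_j + i ∂/∂y_j)`. -/
def ZtStar (n : ℕ) (j : Fin n) (f : Cn n → ℂ) : Cn n → ℂ := fun z =>
  (1 / 2 : ℂ) * (pdx n j f z + Complex.I * pdy n j f z) +
    (1 / 4 : ℂ) * z j * f z

/-- The polynomial `P(z) = Σ_{|α|=p, |β|=q} c_{αβ} z^α z̄^β` on `ℂⁿ`. -/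
def bigraded (n p q : ℕ) (c : (Fin n → ℕ) → (Fin n → ℕ) → ℂ) (z : Cn n) : ℂ :=
  ∑ α ∈ Finset.Nat.antidiagonalTuple n p, ∑ β ∈ Finset.Nat.antidiagonalTuple n q,
    c α β * (∏ j, z j ^ α j) * (∏ j, (starRingEnd ℂ) (z j) ^ β j)

/-- The Laplacian on `ℝ^{2n} ≅ ℂⁿ`. -/
def lap (n : ℕ) (f : Cn n → ℂ) (z : Cn n) : ℂ :=
  ∑ j : Fin n,
    (fderiv ℝ (fun w => fderiv ℝ f w (EuclideanSpace.single j 1)) z (EuclideanSpace.single j 1) +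
      fderiv ℝ (fun w => fderiv ℝ f w (EuclideanSpace.single j Complex.I)) z
        (EuclideanSpace.single j Complex.I))

/-- The twisted convolution `f × g(z) = ∫ f(z−w) g(w) e^{(i/2) Im(z·w̄)} dw`. -/
def twConv (n : ℕ) (f g : Cn n → ℂ) (z : Cn n) : ℂ :=
  ∫ w : Cn n,
    f (z - w) * g w *
      Complex.exp (Complex.I / 2 * (((∑ j, z j * (starRingEnd ℂ) (w j)).im : ℝ) : ℂ))

/-- The normalized surface measure `μ_r` on the sphere of radius `r` centered at the
origin, realized as the pushforward of the normalized surface measure of the unit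
sphere under scaling by `r`. -/
def muSph (n : ℕ) (r : ℝ) : Measure (Cn n) :=
  ((volume : Measure (Cn n)).toSphere Set.univ)⁻¹ •
    Measure.map (fun ω : sphere (0 : Cn n) 1 => r • (ω : Cn n))
      (volume : Measure (Cn n)).toSphere

/-- The weighted twisted spherical mean
`f × gμ_r(z) = ∫_{S_r(o)} f(z−w) g(w) e^{(i/2) Im(z·w̄)} dμ_r(w)`. -/
def twSphMean (n : ℕ) (f g : Cn n → ℂ) (r : ℝ) (z : Cn n) : ℂ :=
  ∫ w,
    f (z - w) * g w *
      Complex.exp (Complex.I / 2 * (((∑ j, z j * (starRingEnd ℂ) (w j)).im : ℝ) : ℂ))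
      ∂(muSph n r)

/-- The twisted spherical mean `f × μ_r(z) = ∫_{S_r(o)} f(z−w) e^{(i/2) Im(z·w̄)} dμ_r(w)`. -/
def tsMean (n : ℕ) (f : Cn n → ℂ) (r : ℝ) (z : Cn n) : ℂ :=
  ∫ w,
    f (z - w) *
      Complex.exp (Complex.I / 2 * (((∑ j, z j * (starRingEnd ℂ) (w j)).im : ℝ) : ℂ))
      ∂(muSph n r)

/-- Ordered product of iterated operators: `(T_1)^{α_1} ∘ ⋯ ∘ (T_n)^{α_n}`. -/
def multiOp (n : ℕ) (T : Fin n → (Cn n → ℂ) → Cn n → ℂ) (α : Fin n → ℕ) :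
    (Cn n → ℂ) → Cn n → ℂ :=
  (List.ofFn fun j : Fin n => (T j)^[α j]).foldr (· ∘ ·) id

/-- The operator `P(A) = Σ c_{αβ} (A^*)^α A^β` attached to a bigraded polynomial. -/
def polyOp (n p q : ℕ) (c : (Fin n → ℕ) → (Fin n → ℕ) → ℂ)
    (Astar A : Fin n → (Cn n → ℂ) → Cn n → ℂ) (f : Cn n → ℂ) (z : Cn n) : ℂ :=
  ∑ α ∈ Finset.Nat.antidiagonalTuple n p, ∑ β ∈ Finset.Nat.antidiagonalTuple n q,
    c α β * multiOp n Astar α (multiOp n A β f) z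

lemma laguerreL_zero (ν : ℕ) (x : ℝ) : laguerreL 0 ν x = 1 := by
  simp [laguerreL]
  exact Nat.factorial_ne_zero ν

lemma coeff_rec (i k ν : ℕ) (hi : i ≤ k) :
    ((((ν+1) + (k+1)).factorial : ℝ)) / ((((k+1) - i).factorial : ℝ) * (((ν+1)+i).factorial : ℝ) * (i.factorial : ℝ))
    = ((ν + (k+1)).factorial : ℝ) / ((((k+1)-i).factorial : ℝ) * ((ν+i).factorial : ℝ) * (i.factorial : ℝ))
      + (((ν+1)+k).factorial : ℝ) / (((k-i).factorial : ℝ) * (((ν+1)+i).factorial : ℝ) * (i.factorial : ℝ)) := by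
  obtain ⟨m, rfl⟩ : ∃ m, k = i + m := ⟨k - i, by omega⟩
  have f1 : (((ν+1)+(i+m+1)).factorial : ℝ) = ((ν+i+m+2 : ℕ) : ℝ) * (((ν+i+m+1).factorial : ℝ)) := by
    rw [show (ν+1)+(i+m+1) = (ν+i+m+1)+1 by omega, Nat.factorial_succ]; push_cast; ring
  have f2 : ((ν + (i+m+1)).factorial : ℝ) = ((ν+i+m+1).factorial : ℝ) := by
    rw [show ν + (i+m+1) = ν+i+m+1 by omega]
  have f3 : (((ν+1)+(i+m)).factorial : ℝ) = ((ν+i+m+1).factorial : ℝ) := by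
    rw [show (ν+1)+(i+m) = ν+i+m+1 by omega]
  have f4 : (((i+m+1) - i).factorial : ℝ) = ((m+1 : ℕ) : ℝ) * ((m.factorial : ℝ)) := by
    rw [show (i+m+1) - i = m+1 by omega, Nat.factorial_succ]; push_cast; ring
  have f5 : (((i+m) - i).factorial : ℝ) = (m.factorial : ℝ) := by
    rw [show (i+m) - i = m by omega]
  have f6 : (((ν+1)+i).factorial : ℝ) = ((ν+i+1 : ℕ) : ℝ) * ((ν+i).factorial : ℝ) := by
    rw [show (ν+1)+i = (ν+i)+1 by omega, Nat.factorial_succ]; push_cast; ring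
  rw [f1, f2, f3, f4, f5, f6]
  have h1 : ((m.factorial : ℝ)) ≠ 0 := Nat.cast_ne_zero.2 (Nat.factorial_ne_zero _)
  have h2 : (((ν+i).factorial : ℝ)) ≠ 0 := Nat.cast_ne_zero.2 (Nat.factorial_ne_zero _)
  have h3 : ((i.factorial : ℝ)) ≠ 0 := Nat.cast_ne_zero.2 (Nat.factorial_ne_zero _)
  have h4 : ((m+1 : ℕ) : ℝ) ≠ 0 := by positivity
  have h5 : ((ν+i+1 : ℕ) : ℝ) ≠ 0 := by positivity
  have h6 : (((ν+i+m+1).factorial : ℝ)) ≠ 0 := Nat.cast_ne_zero.2 (Nat.factorial_ne_zero _)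
  field_simp
  push_cast
  ring

lemma laguerre_rec (k ν : ℕ) (x : ℝ) :
    laguerreL (k+1) (ν+1) x = laguerreL (k+1) ν x + laguerreL k (ν+1) x := by
  rw [← sub_eq_iff_eq_add']
  unfold laguerreL
  rw [← Finset.sum_sub_distrib, Finset.sum_range_succ]
  have h3 : (((k+1).factorial : ℝ)) ≠ 0 := Nat.cast_ne_zero.2 (Nat.factorial_ne_zero _)
  have hlast : (-1 : ℝ) ^ (k+1) * ((ν + 1 + (k+1)).factorial : ℝ) /
      ((((k+1) - (k+1)).factorial : ℝ) * ((ν + 1 + (k+1)).factorial : ℝ) * ((k+1).factorial : ℝ)) * x ^ (k+1)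
      - (-1 : ℝ) ^ (k+1) * ((ν + (k+1)).factorial : ℝ) /
      ((((k+1) - (k+1)).factorial : ℝ) * ((ν + (k+1)).factorial : ℝ) * ((k+1).factorial : ℝ)) * x ^ (k+1) = 0 := by
    have hA : (((ν + 1 + (k+1)).factorial : ℝ)) ≠ 0 := Nat.cast_ne_zero.2 (Nat.factorial_ne_zero _)
    have hB : (((ν + (k+1)).factorial : ℝ)) ≠ 0 := Nat.cast_ne_zero.2 (Nat.factorial_ne_zero _)
    rw [Nat.sub_self, Nat.factorial_zero]
    field_simp
    ring
  rw [hlast, add_zero]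
  apply Finset.sum_congr rfl
  intro i hi
  rw [Finset.mem_range] at hi
  have hrec := coeff_rec i k ν (by omega)
  have e : (ν + 1 + i) = (ν+1) + i := rfl
  linear_combination ((-1:ℝ)^i * x^i) * hrec

lemma laguerre_hasDerivAt_succ (k ν : ℕ) (x : ℝ) :
    HasDerivAt (laguerreL (k+1) ν) (-(laguerreL k (ν+1) x)) x := by
  have H : HasDerivAt (laguerreL (k+1) ν)
      (∑ i ∈ Finset.range (k+2), (-1 : ℝ) ^ i * ((ν + (k+1)).factorial : ℝ) /
        ((((k+1) - i).factorial : ℝ) * ((ν + i).factorial : ℝ) * (i.factorial : ℝ)) *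
        ((i : ℝ) * x ^ (i-1))) x := by
    unfold laguerreL
    exact HasDerivAt.fun_sum fun i _ => (hasDerivAt_pow i x).const_mul _
  convert H using 1
  rw [Finset.sum_range_succ']
  simp only [Nat.cast_zero, zero_mul, mul_zero, add_zero]
  unfold laguerreL
  rw [neg_eq_iff_eq_neg, ← Finset.sum_neg_distrib]
  apply Finset.sum_congr rfl
  intro i hi
  rw [Finset.mem_range] at hi
  have e1 : (k + 1) - (i+1) = k - i := by omega
  have e2 : ((i+1).factorial : ℝ) = ((i+1 : ℕ) : ℝ) * (i.factorial : ℝ) := by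
    rw [Nat.factorial_succ]; push_cast; ring
  have e3 : (ν + (k+1)) = (ν + 1 + k) := by omega
  have e4 : (ν + (i+1)) = (ν + 1 + i) := by omega
  rw [e1, e2, e3, e4]
  have h1 : ((i.factorial : ℝ)) ≠ 0 := Nat.cast_ne_zero.2 (Nat.factorial_ne_zero _)
  have h2 : (((ν+1+i).factorial : ℝ)) ≠ 0 := Nat.cast_ne_zero.2 (Nat.factorial_ne_zero _)
  have h3 : (((k-i).factorial : ℝ)) ≠ 0 := Nat.cast_ne_zero.2 (Nat.factorial_ne_zero _)
  have h4 : ((i+1 : ℕ) : ℝ) ≠ 0 := by positivity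
  have e5 : (i + 1 - 1) = i := by omega
  rw [e5]
  field_simp
  push_cast
  ring

lemma laguerre_hasDerivAt (k ν : ℕ) (x : ℝ) :
    HasDerivAt (laguerreL k ν) (laguerreL k ν x - laguerreL k (ν+1) x) x := by
  cases k with
  | zero =>
      have h1 : laguerreL 0 ν = fun _ => (1:ℝ) := funext fun y => laguerreL_zero ν y
      have h2 : laguerreL 0 (ν+1) x = 1 := laguerreL_zero _ _
      rw [h1, h2]
      simpa using hasDerivAt_const x (1:ℝ)
  | succ m =>
      have h := laguerre_hasDerivAt_succ m ν x
      have : laguerreL (m+1) ν x - laguerreL (m+1) (ν+1) x = -(laguerreL m (ν+1) x) := by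
        rw [laguerre_rec m ν x]; ring
      rw [this]
      exact h

def Qfun (k ν : ℕ) (s : ℝ) : ℝ := laguerreL k ν (s/2) * Real.exp (-s/4)

lemma Qfun_hasDerivAt (k ν : ℕ) (s : ℝ) :
    HasDerivAt (Qfun k ν) ((1/4) * Qfun k ν s - (1/2) * Qfun k (ν+1) s) s := by
  have h1 : HasDerivAt (fun t : ℝ => laguerreL k ν (t/2))
      ((laguerreL k ν (s/2) - laguerreL k (ν+1) (s/2)) * (1/2)) s :=
    by have := (laguerre_hasDerivAt k ν (s/2)).comp s ((hasDerivAt_id s).div_const 2); exact this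
  have h2 : HasDerivAt (fun t : ℝ => Real.exp (-t/4)) (Real.exp (-s/4) * (-1/4)) s := by
    have := (Real.hasDerivAt_exp (-s/4)).comp s (((hasDerivAt_id s).neg).div_const 4)
    simpa [Function.comp_def] using this
  have := h1.mul h2
  refine this.congr_deriv ?_
  unfold Qfun
  ring


def projR (n : ℕ) (j : Fin n) : Cn n →L[ℝ] ℂ :=
  (EuclideanSpace.proj j : Cn n →L[ℂ] ℂ).restrictScalars ℝ

lemma projR_apply {n : ℕ} (j : Fin n) (z : Cn n) : projR n j z = z j := rfl

lemma projR_single {n : ℕ} (j j' : Fin n) (c : ℂ) :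
    projR n j' (EuclideanSpace.single j c) = if j' = j then c else 0 :=
  EuclideanSpace.single_apply j c j'

def conjR : ℂ →L[ℝ] ℂ := Complex.conjCLE.toContinuousLinearMap

lemma conjR_apply (w : ℂ) : conjR w = (starRingEnd ℂ) w := rfl

def DN (n : ℕ) (z : Cn n) : Cn n →L[ℝ] ℝ :=
  ∑ j, ((2*(z j).re) • (Complex.reCLM.comp (projR n j)) +
        (2*(z j).im) • (Complex.imCLM.comp (projR n j)))

lemma normsq_eq {n : ℕ} (z : Cn n) : ‖z‖^2 = ∑ j, ((z j).re^2 + (z j).im^2) := by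
  rw [EuclideanSpace.norm_eq, Real.sq_sqrt (by positivity)]
  exact Finset.sum_congr rfl fun j _ => by
    rw [Complex.sq_norm, Complex.normSq_apply]; ring

lemma hasFDerivAt_normsq {n : ℕ} (z : Cn n) :
    HasFDerivAt (fun w : Cn n => ‖w‖^2) (DN n z) z := by
  have he : (fun w : Cn n => (‖w‖^2 : ℝ)) = fun w => ∑ j, ((w j).re^2 + (w j).im^2) :=
    funext normsq_eq
  rw [he]
  apply HasFDerivAt.fun_sum
  intro j _
  have hre : HasFDerivAt (fun w : Cn n => (w j).re) (Complex.reCLM.comp (projR n j)) z :=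
    (Complex.reCLM.comp (projR n j)).hasFDerivAt
  have him : HasFDerivAt (fun w : Cn n => (w j).im) (Complex.imCLM.comp (projR n j)) z :=
    (Complex.imCLM.comp (projR n j)).hasFDerivAt
  simp only [pow_two]
  have e : (2*(z j).re) • (Complex.reCLM.comp (projR n j)) +
      (2*(z j).im) • (Complex.imCLM.comp (projR n j))
      = ((z j).re • (Complex.reCLM.comp (projR n j)) + (z j).re • (Complex.reCLM.comp (projR n j)))
        + ((z j).im • (Complex.imCLM.comp (projR n j)) + (z j).im • (Complex.imCLM.comp (projR n j))) := by
    module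
  rw [e]
  exact (hre.mul hre).add (him.mul him)

lemma DN_single {n : ℕ} (z : Cn n) (j : Fin n) (c : ℂ) :
    DN n z (EuclideanSpace.single j c) = 2*((z j).re * c.re + (z j).im * c.im) := by
  unfold DN
  rw [ContinuousLinearMap.sum_apply, Finset.sum_eq_single j]
  · simp [projR_single]; ring
  · intro i _ hij
    simp [projR_single, hij]
  · simp

lemma pairing_eq (w c : ℂ) :
    ((2*(w.re * c.re + w.im * c.im) : ℝ) : ℂ) = (starRingEnd ℂ) w * c + w * (starRingEnd ℂ) c := by
  apply Complex.ext <;> simp <;> ring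


/-- The basic family of functions we differentiate. -/
def bfun (n : ℕ) (j0 j1 : Fin n) (C : ℂ) (a b k ν : ℕ) : Cn n → ℂ := fun w =>
  C * (w j0 ^ a * (starRingEnd ℂ) (w j1) ^ b * ((Qfun k ν (‖w‖^2) : ℝ) : ℂ))

lemma fderiv_master {n : ℕ} (j0 j1 : Fin n) (C : ℂ) (a b k ν : ℕ) (z : Cn n)
    (j : Fin n) (c : ℂ) :
    fderiv ℝ (bfun n j0 j1 C a b k ν) z (EuclideanSpace.single j c)
    = C * ( (if j0 = j then (a:ℂ) * z j0 ^ (a-1) * c else 0) * ((starRingEnd ℂ) (z j1) ^ b)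
              * ((Qfun k ν (‖z‖^2) : ℝ) : ℂ)
        + z j0 ^ a * (if j1 = j then (b:ℂ) * (starRingEnd ℂ) (z j1) ^ (b-1) * (starRingEnd ℂ) c else 0)
              * ((Qfun k ν (‖z‖^2) : ℝ) : ℂ)
        + z j0 ^ a * (starRingEnd ℂ) (z j1) ^ b *
            (((1/4) * Qfun k ν (‖z‖^2) - (1/2) * Qfun k (ν+1) (‖z‖^2) : ℝ) : ℂ) *
            ((starRingEnd ℂ) (z j) * c + z j * (starRingEnd ℂ) c) ) := by
  have h1 : HasFDerivAt (fun w : Cn n => w j0 ^ a)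
      (((a:ℂ) * z j0 ^ (a-1)) • (projR n j0)) z :=
    (hasDerivAt_pow a (z j0)).comp_hasFDerivAt z (projR n j0).hasFDerivAt
  have h2 : HasFDerivAt (fun w : Cn n => (starRingEnd ℂ) (w j1) ^ b)
      (((b:ℂ) * (starRingEnd ℂ) (z j1) ^ (b-1)) • (conjR.comp (projR n j1))) z :=
    (hasDerivAt_pow b ((starRingEnd ℂ) (z j1))).comp_hasFDerivAt z
      (conjR.comp (projR n j1)).hasFDerivAt
  have hq : HasFDerivAt (fun w : Cn n => Qfun k ν (‖w‖^2))
      (((1/4) * Qfun k ν (‖z‖^2) - (1/2) * Qfun k (ν+1) (‖z‖^2)) • DN n z) z :=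
    by have := (Qfun_hasDerivAt k ν (‖z‖^2)).comp_hasFDerivAt z (hasFDerivAt_normsq z); exact this
  have h3 : HasFDerivAt (fun w : Cn n => ((Qfun k ν (‖w‖^2) : ℝ) : ℂ))
      (Complex.ofRealCLM.comp
        ((((1/4) * Qfun k ν (‖z‖^2) - (1/2) * Qfun k (ν+1) (‖z‖^2)) • DN n z))) z :=
    Complex.ofRealCLM.hasFDerivAt.comp z hq
  have H := ((h1.fun_mul (h2.fun_mul h3)).const_mul C)
  have He : bfun n j0 j1 C a b k ν = fun w =>
      C * ((w j0 ^ a) * ((starRingEnd ℂ) (w j1) ^ b * ((Qfun k ν (‖w‖^2) : ℝ) : ℂ))) := by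
    funext w; unfold bfun; ring
  rw [He, H.fderiv]
  simp only [ContinuousLinearMap.coe_smul', Pi.smul_apply, ContinuousLinearMap.add_apply,
    ContinuousLinearMap.smul_apply, ContinuousLinearMap.comp_apply, projR_single,
    Complex.ofRealCLM_apply, conjR_apply, DN_single, smul_eq_mul]
  rw [Complex.ofReal_mul, pairing_eq]
  simp only [apply_ite (starRingEnd ℂ), map_zero, mul_ite, ite_mul, mul_zero, zero_mul]
  split_ifs <;> ring

lemma Qfun_rec (m ν : ℕ) (s : ℝ) :
    Qfun (m+1) (ν+1) s = Qfun (m+1) ν s + Qfun m (ν+1) s := by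
  unfold Qfun; rw [laguerre_rec]; ring

lemma Qfun_zero_succ (ν : ℕ) (s : ℝ) : Qfun 0 (ν+1) s = Qfun 0 ν s := by
  unfold Qfun; rw [laguerreL_zero, laguerreL_zero]

lemma Zt_step {n : ℕ} (j0 j1 : Fin n) (h : j0 ≠ j1) (C : ℂ) (a b k ν : ℕ) :
    Zt n j1 (bfun n j0 j1 C a b k ν) = bfun n j0 j1 (-(1/2) * C) a (b+1) k (ν+1) := by
  funext z
  show (1 / 2 : ℂ) * (pdx n j1 (bfun n j0 j1 C a b k ν) z
      - Complex.I * pdy n j1 (bfun n j0 j1 C a b k ν) z) -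
    (1 / 4 : ℂ) * (starRingEnd ℂ) (z j1) * (bfun n j0 j1 C a b k ν) z
    = bfun n j0 j1 (-(1/2) * C) a (b+1) k (ν+1) z
  unfold pdx pdy
  rw [fderiv_master, fderiv_master]
  simp only [if_neg h, if_pos rfl]
  unfold bfun
  simp only [map_one, Complex.conj_I, mul_one]
  push_cast
  linear_combination (C * z j0 ^ a * (b:ℂ) * (starRingEnd ℂ) (z j1) ^ (b-1) *
      ((Qfun k ν (‖z‖^2) : ℝ) : ℂ) / 2
    + C * z j0 ^ a * (starRingEnd ℂ) (z j1) ^ b *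
      ((1/4 : ℂ) * ((Qfun k ν (‖z‖^2) : ℝ) : ℂ) - (1/2) * ((Qfun k (ν+1) (‖z‖^2) : ℝ) : ℂ)) *
      (z j1 - (starRingEnd ℂ) (z j1)) / 2) * Complex.I_sq

lemma ZtStar_step_succ {n : ℕ} (j0 j1 : Fin n) (h : j0 ≠ j1) (C : ℂ) (a b m ν : ℕ) :
    ZtStar n j0 (bfun n j0 j1 C a b (m+1) ν) = bfun n j0 j1 (-(1/2) * C) (a+1) b m (ν+1) := by
  funext z
  show (1 / 2 : ℂ) * (pdx n j0 (bfun n j0 j1 C a b (m+1) ν) z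
      + Complex.I * pdy n j0 (bfun n j0 j1 C a b (m+1) ν) z) +
    (1 / 4 : ℂ) * (z j0) * (bfun n j0 j1 C a b (m+1) ν) z
    = bfun n j0 j1 (-(1/2) * C) (a+1) b m (ν+1) z
  unfold pdx pdy
  rw [fderiv_master, fderiv_master]
  simp only [if_pos rfl, if_neg (Ne.symm h)]
  unfold bfun
  simp only [map_one, Complex.conj_I, mul_one]
  have hr : ((Qfun m (ν+1) (‖z‖^2) : ℝ) : ℂ)
      = ((Qfun (m+1) (ν+1) (‖z‖^2) : ℝ) : ℂ) - ((Qfun (m+1) ν (‖z‖^2) : ℝ) : ℂ) := by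
    rw [← Complex.ofReal_sub]; norm_cast; rw [Qfun_rec]; ring
  push_cast
  linear_combination (C * (a:ℂ) * z j0 ^ (a-1) * (starRingEnd ℂ) (z j1) ^ b *
      ((Qfun (m+1) ν (‖z‖^2) : ℝ) : ℂ) / 2
    + C * z j0 ^ a * (starRingEnd ℂ) (z j1) ^ b *
      ((1/4 : ℂ) * ((Qfun (m+1) ν (‖z‖^2) : ℝ) : ℂ) - (1/2) * ((Qfun (m+1) (ν+1) (‖z‖^2) : ℝ) : ℂ)) *
      ((starRingEnd ℂ) (z j0) - z j0) / 2) * Complex.I_sq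
    + (C * z j0 ^ a * z j0 * (starRingEnd ℂ) (z j1) ^ b / 2) * hr

lemma ZtStar_step_zero {n : ℕ} (j0 j1 : Fin n) (h : j0 ≠ j1) (C : ℂ) (a b ν : ℕ) :
    ZtStar n j0 (bfun n j0 j1 C a b 0 ν) = fun _ => (0:ℂ) := by
  funext z
  show (1 / 2 : ℂ) * (pdx n j0 (bfun n j0 j1 C a b 0 ν) z
      + Complex.I * pdy n j0 (bfun n j0 j1 C a b 0 ν) z) +
    (1 / 4 : ℂ) * (z j0) * (bfun n j0 j1 C a b 0 ν) z = 0
  unfold pdx pdy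
  rw [fderiv_master, fderiv_master]
  simp only [if_pos rfl, if_neg (Ne.symm h)]
  unfold bfun
  simp only [map_one, Complex.conj_I, mul_one]
  have hr : ((Qfun 0 (ν+1) (‖z‖^2) : ℝ) : ℂ) = ((Qfun 0 ν (‖z‖^2) : ℝ) : ℂ) := by
    norm_cast; exact Qfun_zero_succ ν _
  push_cast
  linear_combination (C * (a:ℂ) * z j0 ^ (a-1) * (starRingEnd ℂ) (z j1) ^ b *
      ((Qfun 0 ν (‖z‖^2) : ℝ) : ℂ) / 2
    + C * z j0 ^ a * (starRingEnd ℂ) (z j1) ^ b *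
      ((1/4 : ℂ) * ((Qfun 0 ν (‖z‖^2) : ℝ) : ℂ) - (1/2) * ((Qfun 0 (ν+1) (‖z‖^2) : ℝ) : ℂ)) *
      ((starRingEnd ℂ) (z j0) - z j0) / 2) * Complex.I_sq
    - (C * z j0 ^ a * z j0 * (starRingEnd ℂ) (z j1) ^ b / 2) * hr


lemma ZtStar_zero_fun {n : ℕ} (j : Fin n) :
    ZtStar n j (fun _ => (0:ℂ)) = fun _ => 0 := by
  funext z
  show (1/2:ℂ) * (pdx n j (fun _ => (0:ℂ)) z + Complex.I * pdy n j (fun _ => (0:ℂ)) z)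
      + (1/4:ℂ) * z j * 0 = 0
  unfold pdx pdy
  simp

lemma Zt_iter {n : ℕ} (j0 j1 : Fin n) (h : j0 ≠ j1) (C : ℂ) (a b k ν : ℕ) (q : ℕ) :
    (Zt n j1)^[q] (bfun n j0 j1 C a b k ν) = bfun n j0 j1 ((-(1/2))^q * C) a (b+q) k (ν+q) := by
  induction q with
  | zero => norm_num
  | succ m ih =>
      rw [Function.iterate_succ_apply', ih, Zt_step j0 j1 h]
      rw [show (-(1/2) : ℂ) * ((-(1/2))^m * C) = (-(1/2))^(m+1) * C from by ring]
      rfl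

lemma ZtStar_iter {n : ℕ} (j0 j1 : Fin n) (h : j0 ≠ j1) (C : ℂ) (a b ν : ℕ) (p : ℕ) :
    ∀ m a ν, (ZtStar n j0)^[p] (bfun n j0 j1 C a b (m + p) ν)
      = bfun n j0 j1 ((-(1/2))^p * C) (a+p) b m (ν+p) := by
  induction p with
  | zero => intro m a ν; norm_num
  | succ pp ih =>
      intro m a ν
      rw [show m + (pp+1) = (m+1) + pp from by omega, Function.iterate_succ_apply', ih (m+1) a ν,
        ZtStar_step_succ j0 j1 h]
      rw [show (-(1/2) : ℂ) * ((-(1/2))^pp * C) = (-(1/2))^(pp+1) * C from by ring]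
      rfl

lemma ZtStar_iter' {n : ℕ} (j0 j1 : Fin n) (h : j0 ≠ j1) (C : ℂ) (a b ν p k : ℕ) (hpk : p ≤ k) :
    (ZtStar n j0)^[p] (bfun n j0 j1 C a b k ν)
      = bfun n j0 j1 ((-(1/2))^p * C) (a+p) b (k-p) (ν+p) := by
  have := ZtStar_iter j0 j1 h C a b ν p (k-p) a ν
  rw [show (k-p) + p = k from by omega] at this
  exact this

lemma ZtStar_iter_zero {n : ℕ} (j : Fin n) (p : ℕ) :
    (ZtStar n j)^[p] (fun _ => (0:ℂ)) = fun _ => 0 := by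
  induction p with
  | zero => rfl
  | succ m ih => rw [Function.iterate_succ_apply', ih, ZtStar_zero_fun]

lemma phiFn_eq_bfun {n : ℕ} (j0 j1 : Fin n) (k ν : ℕ) :
    phiFn n k ν = bfun n j0 j1 1 0 0 k ν := by
  funext z
  simp [phiFn, bfun, Qfun]


theorem stmt1 (n p q : ℕ) (hn : 2 ≤ n) (k : ℕ) :
    (p ≤ k → ∀ z : Cn n,
        (ZtStar n ⟨0, by omega⟩)^[p] ((Zt n ⟨1, by omega⟩)^[q] (phiFn n k (n - 1))) z =
          (-2 : ℂ) ^ (-(p : ℤ) - (q : ℤ)) * z ⟨0, by omega⟩ ^ p *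
            (starRingEnd ℂ) (z ⟨1, by omega⟩) ^ q * phiFn n (k - p) (n + p + q - 1) z) ∧
    (k < p → ∀ z : Cn n,
        (ZtStar n ⟨0, by omega⟩)^[p] ((Zt n ⟨1, by omega⟩)^[q] (phiFn n k (n - 1))) z = 0) := by
  have hne : (⟨0, by omega⟩ : Fin n) ≠ ⟨1, by omega⟩ := by
    exact Fin.ne_of_val_ne (by norm_num)
  have hc : ((-(1/2) : ℂ))^p * ((-(1/2))^q * 1) = (-2:ℂ)^(-(p:ℤ) - (q:ℤ)) := by
    rw [show (-(p:ℤ) - (q:ℤ)) = -(((p+q : ℕ) : ℤ)) from by push_cast; ring,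
      zpow_neg, zpow_natCast, ← inv_pow, pow_add]
    norm_num
  constructor
  · intro hpk z
    rw [phiFn_eq_bfun ⟨0, by omega⟩ ⟨1, by omega⟩,
      Zt_iter _ _ hne 1 0 0 k (n-1) q,
      ZtStar_iter' _ _ hne _ 0 (0+q) ((n-1)+q) p k hpk]
    rw [show n + p + q - 1 = ((n-1)+q)+p from by omega]
    rw [phiFn_eq_bfun (⟨0, by omega⟩ : Fin n) ⟨1, by omega⟩ (k-p) (((n-1)+q)+p)]
    unfold bfun
    rw [hc]
    simp only [zero_add, pow_zero]
    ring
  · intro hkp z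
    rw [phiFn_eq_bfun ⟨0, by omega⟩ ⟨1, by omega⟩,
      Zt_iter _ _ hne 1 0 0 k (n-1) q]
    obtain ⟨m, rfl⟩ : ∃ m, p = m + (1 + k) := ⟨p - k - 1, by omega⟩
    rw [Function.iterate_add_apply, Function.iterate_add_apply _ 1 k,
      ZtStar_iter' _ _ hne _ 0 (0+q) ((n-1)+q) k k le_rfl,
      Function.iterate_one]
    rw [show k - k = 0 from Nat.sub_self k, ZtStar_step_zero _ _ hne, ZtStar_iter_zero]
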